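/- The function g(r) = −cos r (r cos r + sin r)/(r + cos r sin r) is negative on [0, π/2), positive on (π/2, r_M), and negative on (r_M, π+δ] for small δ > 0, where r_M ∈ (π/2, π) is the unique solution of r_M = −tan r_M in that interval. -/
import Mathlib

open Real

/-- `g(r) = −cos r (r cos r + sin r)/(r + cos r sin r)`, extended continuously
by `g(0) = −1` at `r = 0`. -/
noncomputable def gOT (r : ℝ) : ℝ :=
  if r = 0 then -1
  else -(Real.cos r * (r * Real.cos r + Real.sin r)) / (r + Real.cos r * Real.sin r)

lemma gOT_denom_pos {r : ℝ} (hr : 0 < r) : 0 < r + Real.cos r * Real.sin r := by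
  rcases le_or_gt r (1/2) with h | h
  · have hs : 0 ≤ Real.sin r :=
      Real.sin_nonneg_of_nonneg_of_le_pi hr.le (by nlinarith [Real.pi_gt_three])
    have hc : 0 ≤ Real.cos r :=
      Real.cos_nonneg_of_mem_Icc ⟨by nlinarith [Real.pi_gt_three], by nlinarith [Real.pi_gt_three]⟩
    nlinarith [mul_nonneg hc hs]
  · nlinarith [Real.sin_sq_add_cos_sq r, sq_nonneg (Real.sin r + Real.cos r)]

lemma contN : Continuous (fun r : ℝ => r * Real.cos r + Real.sin r) := by continuity

/-- `g` is negative on `[0, π/2)`, positive on `(π/2, r_M)`, and negative on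
`(r_M, π + δ]` for all small `δ > 0`, where `r_M ∈ (π/2, π)` is the unique solution
of `r_M = −tan r_M` there, i.e. the root of `r cos r + sin r`. -/
theorem stmt3 (rM : ℝ) (hrM : rM ∈ Set.Ioo (π / 2) π)
    (hroot : rM * Real.cos rM + Real.sin rM = 0)
    (huniq : ∀ r ∈ Set.Ioo (π / 2) π, r * Real.cos r + Real.sin r = 0 → r = rM) :
    (∀ r ∈ Set.Ico (0 : ℝ) (π / 2), gOT r < 0) ∧
    (∀ r ∈ Set.Ioo (π / 2) rM, 0 < gOT r) ∧
    (∃ δ₀ > (0 : ℝ), ∀ δ ∈ Set.Ioo (0 : ℝ) δ₀, ∀ r ∈ Set.Ioc rM (π + δ), gOT r < 0) := by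
  obtain ⟨hrM1, hrM2⟩ := hrM
  have hpi : (0:ℝ) < π := Real.pi_pos
  set N : ℝ → ℝ := fun r => r * Real.cos r + Real.sin r with hN
  have hNhalf : N (π/2) = 1 := by simp [hN]
  have hNpi : N π = -π := by simp [hN]
  -- N > 0 on (π/2, rM)
  have hNpos : ∀ r ∈ Set.Ioo (π/2) rM, 0 < N r := by
    intro r ⟨h1, h2⟩
    by_contra hle
    push_neg at hle
    have hsub : Set.Icc (N r) (N (π/2)) ⊆ N '' Set.Icc (π/2) r :=
      intermediate_value_Icc' (by linarith) (contN.continuousOn)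
    obtain ⟨c, hc, hc0⟩ := hsub ⟨hle, by rw [hNhalf]; norm_num⟩
    have hcne : c ≠ π/2 := by
      intro h; rw [h, hNhalf] at hc0; norm_num at hc0
    have : c = rM := huniq c ⟨lt_of_le_of_ne hc.1 (Ne.symm hcne), by linarith [hc.2]⟩ hc0
    linarith [hc.2]
  -- N < 0 on (rM, π]
  have hNneg : ∀ r ∈ Set.Ioc rM π, N r < 0 := by
    intro r ⟨h1, h2⟩
    rcases eq_or_lt_of_le h2 with rfl | h2'
    · rw [hNpi]; linarith
    by_contra hle
    push_neg at hle
    have hsub : Set.Icc (N π) (N r) ⊆ N '' Set.Icc r π :=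
      intermediate_value_Icc' (by linarith) (contN.continuousOn)
    obtain ⟨c, hc, hc0⟩ := hsub ⟨by rw [hNpi]; linarith, hle⟩
    have hcne : c ≠ π := by
      intro h; rw [h, hNpi] at hc0; linarith
    have : c = rM := huniq c ⟨by linarith [hc.1], lt_of_le_of_ne hc.2 hcne⟩ hc0
    linarith [hc.1]
  refine ⟨?_, ?_, ?_⟩
  · -- negative on [0, π/2)
    intro r ⟨h0, h1⟩
    rcases eq_or_lt_of_le h0 with rfl | h0'
    · simp [gOT]
    · have hne : r ≠ 0 := ne_of_gt h0'
      rw [gOT, if_neg hne]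
      have hD := gOT_denom_pos h0'
      have hc : 0 < Real.cos r := Real.cos_pos_of_mem_Ioo ⟨by linarith, h1⟩
      have hs : 0 < Real.sin r := Real.sin_pos_of_pos_of_lt_pi h0' (by linarith)
      have hNr : 0 < r * Real.cos r + Real.sin r := by positivity
      apply div_neg_of_neg_of_pos _ hD
      nlinarith
  · -- positive on (π/2, rM)
    intro r hr
    have h1 := hr.1
    have hr0 : (0:ℝ) < r := by linarith
    have hne : r ≠ 0 := ne_of_gt hr0
    rw [gOT, if_neg hne]
    have hD := gOT_denom_pos hr0
    have hc : Real.cos r < 0 :=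
      Real.cos_neg_of_pi_div_two_lt_of_lt h1 (by linarith [hr.2])
    have hNr := hNpos r hr
    simp only [hN] at hNr
    apply div_pos _ hD
    nlinarith
  · -- negative on (rM, π + δ]
    refine ⟨1/2, by norm_num, ?_⟩
    intro δ ⟨hδ0, hδ1⟩ r ⟨h1, h2⟩
    have hr0 : (0:ℝ) < r := by linarith
    have hne : r ≠ 0 := ne_of_gt hr0
    rw [gOT, if_neg hne]
    have hD := gOT_denom_pos hr0
    have hc : Real.cos r < 0 :=
      Real.cos_neg_of_pi_div_two_lt_of_lt (by linarith) (by nlinarith [Real.pi_gt_three])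
    have hNr : r * Real.cos r + Real.sin r < 0 := by
      rcases le_or_gt r π with hle | hgt
      · have := hNneg r ⟨h1, hle⟩
        simpa [hN] using this
      · have hs : Real.sin r ≤ 0 := by
          have h3 : Real.sin r = -Real.sin (r - π) := by
            have := Real.sin_add_pi (r - π)
            rwa [sub_add_cancel] at this
          rw [h3, neg_nonpos]
          exact Real.sin_nonneg_of_nonneg_of_le_pi (by linarith) (by nlinarith [Real.pi_gt_three])
        nlinarith
    apply div_neg_of_neg_of_pos _ hD
    nlinarith
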